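/- Let n ≥ 1, let ω ∈ ℝⁿ \ ℚⁿ be nonresonant with periods T_i = T_i(ω), and for each i let w_i ∈ ℤⁿ be a best-approximation numerator, i.e. |T_i·ω − w_i| = ‖T_i·ω‖_ℤ. Let k ∈ ℤⁿ be nonzero and let i ≥ 1 be an index such that T_{i−1} divides ⟨k, w_{i−1}⟩ while T_i does not divide ⟨k, w_i⟩. Then the Euclidean norm of k satisfies ‖k‖ ≥ T_{i−1} / (2·√n · T_i^{1 − 1/n}). -/
import Mathlib


open Finset

/-- Sup norm on `ℝⁿ`. -/
noncomputable def supNorm {n : ℕ} (x : Fin n → ℝ) : ℝ := ⨆ i, |x i|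

/-- Sup-norm distance from `x ∈ ℝⁿ` to the lattice `ℤⁿ`. -/
noncomputable def distZ {n : ℕ} (x : Fin n → ℝ) : ℝ :=
  sInf {r : ℝ | ∃ k : Fin n → ℤ, r = supNorm (fun i => x i - k i)}

/-- Distance from a real number to `ℤ`. -/
noncomputable def distZ1 (t : ℝ) : ℝ := sInf {r : ℝ | ∃ m : ℤ, r = |t - m|}

/-- `ω ∈ ℚⁿ`. -/
def IsRationalVec {n : ℕ} (ω : Fin n → ℝ) : Prop := ∀ i, ∃ q : ℚ, (q : ℝ) = ω i

/-- `ω` is resonant: some nonzero integer vector `k` has `⟨k, ω⟩ ∈ ℤ`. -/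
def Resonant {n : ℕ} (ω : Fin n → ℝ) : Prop :=
  ∃ k : Fin n → ℤ, k ≠ 0 ∧ ∃ m : ℤ, ∑ i, (k i : ℝ) * ω i = (m : ℝ)

/-- The sequence of periods of `ω`. -/
noncomputable def periods {n : ℕ} (ω : Fin n → ℝ) : ℕ → ℕ
  | 0 => 1
  | i + 1 => sInf {T : ℕ | 1 ≤ T ∧
      distZ (fun j => (T : ℝ) * ω j) < distZ (fun j => (periods ω i : ℝ) * ω j)}

/-- The resonance module of `ω`, as a subgroup of `ℤⁿ`. -/
def resModule {n : ℕ} (ω : Fin n → ℝ) : AddSubgroup (Fin n → ℤ) where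
  carrier := {k | ∃ m : ℤ, ∑ i, (k i : ℝ) * ω i = (m : ℝ)}
  zero_mem' := ⟨0, by simp⟩
  add_mem' := by
    rintro a b ⟨ma, ha⟩ ⟨mb, hb⟩
    refine ⟨ma + mb, ?_⟩
    push_cast
    simp only [Pi.add_apply, Int.cast_add, add_mul, Finset.sum_add_distrib, ha, hb]
  neg_mem' := by
    rintro a ⟨m, hm⟩
    refine ⟨-m, ?_⟩
    push_cast
    simp [neg_mul, Finset.sum_neg_distrib, hm]
section Aux1
variable {n : ℕ}

lemma le_supNorm (x : Fin n → ℝ) (j : Fin n) : |x j| ≤ supNorm x :=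
  le_ciSup (f := fun i => |x i|) (Set.Finite.bddAbove (Set.finite_range _)) j

lemma supNorm_le [Nonempty (Fin n)] {x : Fin n → ℝ} {c : ℝ} (h : ∀ j, |x j| ≤ c) :
    supNorm x ≤ c := ciSup_le h

lemma supNorm_nonneg [Nonempty (Fin n)] (x : Fin n → ℝ) : 0 ≤ supNorm x := by
  obtain ⟨j⟩ := ‹Nonempty (Fin n)›
  exact le_trans (abs_nonneg (x j)) (le_supNorm x j)

lemma abs_sub_round_le' (t : ℝ) (m : ℤ) : |t - round t| ≤ |t - (m : ℝ)| := by
  rw [abs_sub_round_eq_min]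
  rcases le_or_gt m ⌊t⌋ with h | h
  · have h1 : (m : ℝ) ≤ ⌊t⌋ := by exact_mod_cast h
    have h2 := Int.floor_le t
    have h3 : Int.fract t = t - ⌊t⌋ := rfl
    rw [abs_of_nonneg (by linarith)]
    have := min_le_left (Int.fract t) (1 - Int.fract t)
    linarith
  · have h1 : (⌊t⌋ : ℝ) + 1 ≤ (m : ℝ) := by exact_mod_cast h
    have h2 := Int.lt_floor_add_one t
    have h3 : Int.fract t = t - ⌊t⌋ := rfl
    rw [abs_of_nonpos (by linarith)]
    have := min_le_right (Int.fract t) (1 - Int.fract t)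
    linarith

lemma distZ_bddBelow (x : Fin n → ℝ) [Nonempty (Fin n)] :
    BddBelow {r : ℝ | ∃ k : Fin n → ℤ, r = supNorm (fun i => x i - k i)} := by
  refine ⟨0, ?_⟩
  rintro r ⟨k, rfl⟩
  exact supNorm_nonneg _

lemma distZ_le_supNorm [Nonempty (Fin n)] (x : Fin n → ℝ) (k : Fin n → ℤ) :
    distZ x ≤ supNorm (fun i => x i - k i) :=
  csInf_le (distZ_bddBelow x) ⟨k, rfl⟩

lemma distZ_eq_round [Nonempty (Fin n)] (x : Fin n → ℝ) :
    distZ x = supNorm (fun j => x j - round (x j)) := by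
  refine le_antisymm (distZ_le_supNorm x fun j => round (x j)) ?_
  refine le_csInf ⟨_, ⟨fun j => round (x j), rfl⟩⟩ ?_
  rintro r ⟨k, rfl⟩
  refine supNorm_le fun j => ?_
  exact le_trans (abs_sub_round_le' (x j) (k j)) (le_supNorm (fun i => x i - k i) j)

lemma coord_le_distZ [Nonempty (Fin n)] (x : Fin n → ℝ) (j : Fin n) :
    |x j - round (x j)| ≤ distZ x := by
  rw [distZ_eq_round]
  exact le_supNorm (fun j => x j - round (x j)) j

lemma distZ_nonneg [Nonempty (Fin n)] (x : Fin n → ℝ) : 0 ≤ distZ x := by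
  rw [distZ_eq_round]; exact supNorm_nonneg _

lemma distZ_le_half [Nonempty (Fin n)] (x : Fin n → ℝ) : distZ x ≤ 1 / 2 := by
  rw [distZ_eq_round]
  exact supNorm_le fun j => abs_sub_round (x j)

end Aux1
section Aux2
variable {n : ℕ} [Nonempty (Fin n)]


lemma distZ_pos {ω : Fin n → ℝ} (hirr : ¬ IsRationalVec ω) (T : ℕ) (hT : 1 ≤ T) :
    0 < distZ (fun j => (T : ℝ) * ω j) := by
  rcases lt_or_eq_of_le (distZ_nonneg (fun j => (T : ℝ) * ω j)) with h | h
  · exact h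
  exfalso
  apply hirr
  intro j
  have h1 := coord_le_distZ (fun j => (T : ℝ) * ω j) j
  rw [← h] at h1
  have h2 : (T : ℝ) * ω j = round ((T : ℝ) * ω j) := by
    have := abs_nonneg ((T : ℝ) * ω j - round ((T : ℝ) * ω j))
    have h3 : |(T:ℝ) * ω j - round ((T:ℝ) * ω j)| = 0 := le_antisymm h1 this
    rw [abs_eq_zero] at h3
    linarith
  refine ⟨(round ((T : ℝ) * ω j) : ℚ) / (T : ℚ), ?_⟩
  have hT0 : (T : ℝ) ≠ 0 := by positivity
  push_cast
  field_simp
  linarith [h2]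

lemma dirichlet (ω : Fin n → ℝ) {ε : ℝ} (hε : 0 < ε) :
    ∃ T : ℕ, 1 ≤ T ∧ distZ (fun j => (T : ℝ) * ω j) < ε := by
  obtain ⟨M, hM⟩ := exists_nat_gt (1 / ε)
  set M' : ℕ := M + 1 with hM'def
  have hM'pos : (0 : ℝ) < M' := by positivity
  have hM'ε : 1 / (M' : ℝ) < ε := by
    rw [div_lt_iff₀ hM'pos]
    rw [div_lt_iff₀ hε] at hM
    have : (M : ℝ) < M' := by exact_mod_cast Nat.lt_succ_self M
    nlinarith
  -- pigeonhole map
  have hfloor : ∀ (t : ℝ), (⌊Int.fract t * M'⌋).toNat < M' := by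
    intro t
    have h1 : Int.fract t * M' < M' := by
      have := Int.fract_lt_one t
      nlinarith
    have h2 : (0:ℝ) ≤ Int.fract t * M' := by
      have := Int.fract_nonneg t
      positivity
    have h3 : ⌊Int.fract t * M'⌋ < (M' : ℤ) := by
      rw [Int.floor_lt]; exact_mod_cast h1
    omega
  -- pigeonhole
  set F : ℕ → (Fin n → Fin M') := fun T j =>
    ⟨(⌊Int.fract ((T : ℝ) * ω j) * M'⌋).toNat, hfloor _⟩ with hFdef
  obtain ⟨a, b, hab, hFab⟩ := Finite.exists_ne_map_eq_of_infinite F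
  -- wlog a < b
  rcases hab.lt_or_gt with h | h
  case' inr => rename' h => h', a => b, b => a; have h := h'; rw [eq_comm] at hFab
  all_goals {
    set d : ℕ := b - a with hddef
    have hd1 : 1 ≤ d := by omega
    have hba : (d : ℝ) = (b : ℝ) - (a : ℝ) := by
      push_cast [hddef, Nat.cast_sub h.le]; ring
    refine ⟨d, hd1, ?_⟩
    have hcoord : ∀ j, |(d : ℝ) * ω j - ((⌊(b : ℝ) * ω j⌋ - ⌊(a : ℝ) * ω j⌋ : ℤ) : ℝ)| ≤ 1 / M' := by
      intro j
      have hfe : (⌊Int.fract ((b : ℝ) * ω j) * M'⌋).toNat = (⌊Int.fract ((a : ℝ) * ω j) * M'⌋).toNat := by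
        have := congrFun hFab j
        simpa [hFdef, Fin.ext_iff] using this.symm
      have hnn : ∀ t : ℝ, (0:ℤ) ≤ ⌊Int.fract t * M'⌋ := by
        intro t
        apply Int.floor_nonneg.2
        have := Int.fract_nonneg t
        positivity
      have hfe' : ⌊Int.fract ((b : ℝ) * ω j) * M'⌋ = ⌊Int.fract ((a : ℝ) * ω j) * M'⌋ := by
        have h1 := hnn ((b : ℝ) * ω j); have h2 := hnn ((a : ℝ) * ω j); omega
      -- |fract b*M' - fract a*M'| < 1
      have hb1 := Int.floor_le (Int.fract ((b : ℝ) * ω j) * M')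
      have hb2 := Int.lt_floor_add_one (Int.fract ((b : ℝ) * ω j) * M')
      have ha1 := Int.floor_le (Int.fract ((a : ℝ) * ω j) * M')
      have ha2 := Int.lt_floor_add_one (Int.fract ((a : ℝ) * ω j) * M')
      rw [hfe'] at hb1 hb2
      have hdiff : |Int.fract ((b : ℝ) * ω j) - Int.fract ((a : ℝ) * ω j)| ≤ 1 / M' := by
        have hk : |(Int.fract ((b:ℝ)*ω j) - Int.fract ((a:ℝ)*ω j)) * M'| ≤ 1 := by
          rw [abs_le]; constructor <;> nlinarith
        rw [abs_mul, abs_of_pos hM'pos] at hk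
        rw [le_div_iff₀ hM'pos]
        exact hk
      have hfr : ∀ t : ℝ, Int.fract t = t - ⌊t⌋ := fun t => rfl
      calc |(d : ℝ) * ω j - ((⌊(b : ℝ) * ω j⌋ - ⌊(a : ℝ) * ω j⌋ : ℤ) : ℝ)|
          = |Int.fract ((b : ℝ) * ω j) - Int.fract ((a : ℝ) * ω j)| := by
            rw [hfr, hfr]; push_cast; rw [hba]; ring_nf
        _ ≤ 1 / M' := hdiff
    calc distZ (fun j => (d : ℝ) * ω j)
        ≤ supNorm (fun j => (d : ℝ) * ω j - ((fun j => (⌊(b : ℝ) * ω j⌋ - ⌊(a : ℝ) * ω j⌋ : ℤ)) j : ℝ)) :=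
          distZ_le_supNorm _ _
      _ ≤ 1 / M' := supNorm_le fun j => hcoord j
      _ < ε := hM'ε }

end Aux2
section Aux3
variable {n : ℕ} [Nonempty (Fin n)] {ω : Fin n → ℝ} (hirr : ¬ IsRationalVec ω)
include hirr

lemma one_le_periods : ∀ i, 1 ≤ periods ω i := by
  intro i
  induction i with
  | zero => exact le_refl 1
  | succ i ih =>
    have hne : {T : ℕ | 1 ≤ T ∧
        distZ (fun j => (T : ℝ) * ω j) < distZ (fun j => (periods ω i : ℝ) * ω j)}.Nonempty :=
      dirichlet ω (distZ_pos hirr _ ih)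
    have := Nat.sInf_mem hne
    exact this.1

lemma periods_isLeast (i : ℕ) :
    IsLeast {T : ℕ | 1 ≤ T ∧
      distZ (fun j => (T : ℝ) * ω j) < distZ (fun j => (periods ω i : ℝ) * ω j)}
      (periods ω (i + 1)) := by
  have hne : {T : ℕ | 1 ≤ T ∧
      distZ (fun j => (T : ℝ) * ω j) < distZ (fun j => (periods ω i : ℝ) * ω j)}.Nonempty :=
    dirichlet ω (distZ_pos hirr _ (one_le_periods hirr i))
  exact ⟨Nat.sInf_mem hne, fun b hb => Nat.sInf_le hb⟩

lemma distZ_periods_succ_lt (i : ℕ) :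
    distZ (fun j => (periods ω (i+1) : ℝ) * ω j) < distZ (fun j => (periods ω i : ℝ) * ω j) :=
  (periods_isLeast hirr i).1.2

lemma distZ_ge_of_lt_period {d : ℕ} (hd : 1 ≤ d) {i : ℕ} (hdi : d < periods ω (i+1)) :
    distZ (fun j => (periods ω i : ℝ) * ω j) ≤ distZ (fun j => (d : ℝ) * ω j) := by
  by_contra hc
  push_neg at hc
  exact absurd hdi (not_lt.2 ((periods_isLeast hirr i).2 ⟨hd, hc⟩))

lemma distZ_ge_of_le_period : ∀ (i : ℕ) {d : ℕ}, 1 ≤ d → d ≤ periods ω i →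
    distZ (fun j => (periods ω i : ℝ) * ω j) ≤ distZ (fun j => (d : ℝ) * ω j) := by
  intro i
  induction i with
  | zero =>
    intro d hd1 hd2
    have : d = 1 := by simpa [periods] using le_antisymm hd2 hd1
    subst this
    simp [periods]
  | succ i ih =>
    intro d hd1 hd2
    rcases lt_or_eq_of_le hd2 with h | h
    · exact le_trans (distZ_periods_succ_lt hirr i).le (distZ_ge_of_lt_period hirr hd1 h)
    · rw [h]

lemma periods_lt_succ (i : ℕ) : periods ω i < periods ω (i+1) := by
  by_contra hc
  push_neg at hc
  have h1 := distZ_ge_of_le_period hirr i (one_le_periods hirr (i+1)) hc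
  exact absurd (distZ_periods_succ_lt hirr i) (not_lt.2 h1)
end Aux3
section Aux4
open MeasureTheory Metric
open scoped ENNReal
variable {n : ℕ} [Nonempty (Fin n)] {ω : Fin n → ℝ} (hirr : ¬ IsRationalVec ω)

lemma distZ_le_normPi (x : Fin n → ℝ) :
    distZ x ≤ ‖(fun j => ((x j : ℝ) : AddCircle (1:ℝ)))‖ := by
  rw [distZ_eq_round]
  refine supNorm_le fun j => ?_
  have h1 : |x j - round (x j)| = ‖((x j : ℝ) : AddCircle (1:ℝ))‖ :=
    (UnitAddCircle.norm_eq).symm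
  rw [h1]
  exact norm_le_pi_norm (fun j => ((x j : ℝ) : AddCircle (1:ℝ))) j

include hirr

lemma packing (i : ℕ) :
    (periods ω (i+1) : ℝ) * distZ (fun j => (periods ω i : ℝ) * ω j) ^ n ≤ 1 := by
  set T : ℕ := periods ω (i+1) with hTdef
  set δ : ℝ := distZ (fun j => (periods ω i : ℝ) * ω j) with hδdef
  have hδpos : 0 < δ := distZ_pos hirr _ (one_le_periods hirr i)
  have hδ1 : δ ≤ 1 / 2 := distZ_le_half _
  set p : ℕ → (Fin n → AddCircle (1:ℝ)) := fun a => fun j => (((a : ℝ) * ω j : ℝ) : AddCircle (1:ℝ)) with hpdef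
  have hdist : ∀ a b : ℕ, a < b → b < T → δ ≤ dist (p a) (p b) := by
    intro a b hab hbT
    have hd1 : 1 ≤ b - a := by omega
    have hdT : b - a < T := by omega
    have hsub : p b - p a = fun j => ((((b - a : ℕ) : ℝ) * ω j : ℝ) : AddCircle (1:ℝ)) := by
      funext j
      have hcast : ((b - a : ℕ) : ℝ) * ω j = (b : ℝ) * ω j - (a : ℝ) * ω j := by
        rw [Nat.cast_sub hab.le]; ring
      show (((b : ℝ) * ω j : ℝ) : AddCircle (1:ℝ)) - (((a : ℝ) * ω j : ℝ) : AddCircle (1:ℝ)) = _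
      rw [hcast, ← QuotientAddGroup.mk_sub]
    calc δ ≤ distZ (fun j => ((b - a : ℕ) : ℝ) * ω j) := distZ_ge_of_lt_period hirr hd1 hdT
      _ ≤ ‖(fun j => ((((b - a : ℕ) : ℝ) * ω j : ℝ) : AddCircle (1:ℝ)))‖ := distZ_le_normPi _
      _ = ‖p b - p a‖ := by rw [hsub]
      _ = dist (p a) (p b) := by rw [dist_comm, dist_eq_norm]
  have hdisj : Set.PairwiseDisjoint (↑(Finset.range T) : Set ℕ) (fun a => ball (p a) (δ / 2)) := by
    intro a ha b hb hab
    simp only [Finset.coe_range, Set.mem_Iio] at ha hb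
    rcases hab.lt_or_gt with h | h
    · exact ball_disjoint_ball (by linarith [hdist a b h hb])
    · exact (ball_disjoint_ball (by linarith [hdist b a h ha])).symm
  have hvol : ∀ a : ℕ, volume (ball (p a) (δ / 2)) = ENNReal.ofReal δ ^ n := by
    intro a
    rw [volume_pi_ball _ (by positivity)]
    have hballj : ∀ j : Fin n, volume (ball (p a j) (δ / 2)) = ENNReal.ofReal δ := by
      intro j
      rw [← measure_congr AddCircle.closedBall_ae_eq_ball, AddCircle.volume_closedBall]
      congr 1
      rw [min_eq_right (by linarith)]
      ring
    simp only [hballj, Finset.prod_const, Finset.card_univ, Fintype.card_fin]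
  have hunion : volume (⋃ a ∈ Finset.range T, ball (p a) (δ / 2))
      = (T : ℝ≥0∞) * ENNReal.ofReal δ ^ n := by
    rw [measure_biUnion_finset hdisj (fun a _ => measurableSet_ball)]
    simp [hvol, Finset.sum_const, Finset.card_range, nsmul_eq_mul]
  have huniv : volume (Set.univ : Set (Fin n → AddCircle (1:ℝ))) = 1 := by
    rw [← Set.pi_univ Set.univ, volume_pi_pi]
    simp [AddCircle.measure_univ]
  have hle : (T : ℝ≥0∞) * ENNReal.ofReal δ ^ n ≤ 1 := by
    rw [← hunion, ← huniv]
    exact measure_mono (Set.subset_univ _)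
  have hofreal : ENNReal.ofReal ((T : ℝ) * δ ^ n) ≤ 1 := by
    rw [ENNReal.ofReal_mul (by positivity), ENNReal.ofReal_pow hδpos.le, ENNReal.ofReal_natCast]
    exact hle
  exact ENNReal.ofReal_le_one.mp hofreal
end Aux4

/-- the key lower bound `‖k‖ ≥ T_{i-1}/(2√n · T_i^{1-1/n})` on the
Euclidean norm of `k` when `⟨k, ω_{i-1}⟩ ∈ ℤ` but `⟨k, ω_i⟩ ∉ ℤ`. -/
theorem stmt17 {n : ℕ} (hn : 1 ≤ n) (ω : Fin n → ℝ)
    (hirr : ¬ IsRationalVec ω) (hres : ¬ Resonant ω)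
    (w : ℕ → Fin n → ℤ)
    (hw : ∀ i, (supNorm fun j => (periods ω i : ℝ) * ω j - (w i j : ℝ)) =
      distZ (fun j => (periods ω i : ℝ) * ω j))
    (k : Fin n → ℤ) (hk : k ≠ 0) (i : ℕ) (hi : 1 ≤ i)
    (hdiv : (periods ω (i - 1) : ℤ) ∣ ∑ j, k j * w (i - 1) j)
    (hndiv : ¬ (periods ω i : ℤ) ∣ ∑ j, k j * w i j) :
    Real.sqrt (∑ j, (k j : ℝ) ^ 2) ≥
      (periods ω (i - 1) : ℝ) /
        (2 * Real.sqrt n * (periods ω i : ℝ) ^ ((1 : ℝ) - 1 / (n : ℝ))) := by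
  have hne : Nonempty (Fin n) := Fin.pos_iff_nonempty.mp hn
  obtain ⟨m, rfl⟩ : ∃ m, i = m + 1 := ⟨i - 1, by omega⟩
  simp only [Nat.add_sub_cancel] at hdiv ⊢
  set T' : ℕ := periods ω m with hT'def
  set T : ℕ := periods ω (m+1) with hTdef
  set δ' : ℝ := distZ (fun j => (T' : ℝ) * ω j) with hδ'def
  set δ : ℝ := distZ (fun j => (T : ℝ) * ω j) with hδdef
  set K : ℝ := Real.sqrt (∑ j, (k j : ℝ) ^ 2) with hKdef
  have hT'1 : 1 ≤ T' := one_le_periods hirr m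
  have hT'T : T' < T := periods_lt_succ hirr m
  have hT1 : 1 ≤ T := hT'1.trans hT'T.le
  have hδδ' : δ < δ' := distZ_periods_succ_lt hirr m
  have hδpos : 0 < δ := distZ_pos hirr _ hT1
  have hδ'pos : 0 < δ' := hδpos.trans hδδ'
  have hpack : (T : ℝ) * δ' ^ n ≤ 1 := packing hirr m
  have hTpos : (0:ℝ) < T := by exact_mod_cast hT1
  have hT'pos : (0:ℝ) < T' := by exact_mod_cast hT'1
  -- integer part
  obtain ⟨c, hc⟩ := hdiv
  set M : ℤ := (T : ℤ) * c - ∑ j, k j * w (m+1) j with hMdef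
  have hM0 : M ≠ 0 := by
    intro h
    apply hndiv
    refine ⟨c, ?_⟩
    have : (∑ j, k j * w (m+1) j) = (T : ℤ) * c := by omega
    simpa using this
  have hMabs : (1:ℤ) ≤ |M| := Int.one_le_abs (by omega)
  have hT'M : (T' : ℝ) ≤ |(T' : ℝ) * (M : ℝ)| := by
    rw [abs_mul, abs_of_pos hT'pos]
    nlinarith [abs_nonneg (M:ℝ), (by exact_mod_cast hMabs : (1:ℝ) ≤ |(M:ℝ)|)]
  -- x and the sum identity
  set x : Fin n → ℝ := fun j =>
    (T : ℝ) * ((w m j : ℝ) - (T' : ℝ) * ω j) - (T' : ℝ) * ((w (m+1) j : ℝ) - (T : ℝ) * ω j)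
    with hxdef
  have hsum : (T' : ℝ) * (M : ℝ) = ∑ j, (k j : ℝ) * x j := by
    have hZ : (T' : ℤ) * M = (T : ℤ) * (∑ j, k j * w m j) - (T' : ℤ) * ∑ j, k j * w (m+1) j := by
      rw [hc]; ring
    calc (T' : ℝ) * (M : ℝ) = (((T' : ℤ) * M : ℤ) : ℝ) := by push_cast; ring
      _ = (T : ℝ) * (∑ j, (k j : ℝ) * (w m j : ℝ)) - (T' : ℝ) * ∑ j, (k j : ℝ) * (w (m+1) j : ℝ) := by
          rw [hZ]; push_cast; ring
      _ = ∑ j, (k j : ℝ) * x j := by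
          rw [Finset.mul_sum, Finset.mul_sum, ← Finset.sum_sub_distrib]
          refine Finset.sum_congr rfl fun j _ => ?_
          simp only [hxdef]; ring
  -- coordinate bounds
  have hw' : ∀ (l : ℕ) (j : Fin n),
      |(w l j : ℝ) - (periods ω l : ℝ) * ω j| ≤ distZ (fun j => (periods ω l : ℝ) * ω j) := by
    intro l j
    rw [abs_sub_comm, ← hw l]
    exact le_supNorm (fun j => (periods ω l : ℝ) * ω j - (w l j : ℝ)) j
  have hxbound : ∀ j, |x j| ≤ 2 * (T : ℝ) * δ' := by
    intro j
    have h1 : |(w m j : ℝ) - (T' : ℝ) * ω j| ≤ δ' := hw' m j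
    have h2 : |(w (m+1) j : ℝ) - (T : ℝ) * ω j| ≤ δ := hw' (m+1) j
    have h3 : |x j| ≤ (T : ℝ) * |(w m j : ℝ) - (T' : ℝ) * ω j|
        + (T' : ℝ) * |(w (m+1) j : ℝ) - (T : ℝ) * ω j| := by
      calc |x j| ≤ |(T : ℝ) * ((w m j : ℝ) - (T' : ℝ) * ω j)|
          + |(T' : ℝ) * ((w (m+1) j : ℝ) - (T : ℝ) * ω j)| := abs_sub _ _
        _ = _ := by rw [abs_mul, abs_mul, abs_of_pos hTpos, abs_of_pos hT'pos]
    have hT'Tr : (T' : ℝ) ≤ T := by exact_mod_cast hT'T.le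
    nlinarith [abs_nonneg ((w (m+1) j : ℝ) - (T : ℝ) * ω j)]
  -- Cauchy-Schwarz
  have hCS : (∑ j, (k j : ℝ) * x j) ^ 2 ≤ (∑ j, (k j : ℝ) ^ 2) * (∑ j, x j ^ 2) :=
    Finset.sum_mul_sq_le_sq_mul_sq univ _ _
  have hx2 : (∑ j, x j ^ 2) ≤ (n : ℝ) * (2 * (T : ℝ) * δ') ^ 2 := by
    have hb : ∀ j ∈ univ, x j ^ 2 ≤ (2 * (T : ℝ) * δ') ^ 2 := by
      intro j _
      rw [← sq_abs (x j)]
      exact pow_le_pow_left₀ (abs_nonneg _) (hxbound j) 2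
    calc (∑ j, x j ^ 2) ≤ ∑ _j : Fin n, (2 * (T : ℝ) * δ') ^ 2 := Finset.sum_le_sum hb
      _ = (n : ℝ) * (2 * (T : ℝ) * δ') ^ 2 := by
          rw [Finset.sum_const, Finset.card_univ, Fintype.card_fin, nsmul_eq_mul]
  have hKnonneg : 0 ≤ K := Real.sqrt_nonneg _
  have h2Tδ : (0:ℝ) ≤ 2 * (T : ℝ) * δ' := by positivity
  have habs : |(T' : ℝ) * (M : ℝ)| ≤ K * (Real.sqrt n * (2 * (T : ℝ) * δ')) := by
    rw [hsum]
    have h1 : |∑ j, (k j : ℝ) * x j| = Real.sqrt ((∑ j, (k j : ℝ) * x j) ^ 2) :=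
      (Real.sqrt_sq_eq_abs _).symm
    rw [h1]
    calc Real.sqrt ((∑ j, (k j : ℝ) * x j) ^ 2)
        ≤ Real.sqrt ((∑ j, (k j : ℝ) ^ 2) * ((n : ℝ) * (2 * (T : ℝ) * δ') ^ 2)) := by
          apply Real.sqrt_le_sqrt
          nlinarith [Finset.sum_nonneg (fun j (_ : j ∈ univ) => sq_nonneg ((k j : ℝ)))]
      _ = K * (Real.sqrt n * (2 * (T : ℝ) * δ')) := by
          rw [Real.sqrt_mul (Finset.sum_nonneg (fun j _ => sq_nonneg ((k j : ℝ)))),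
            Real.sqrt_mul (by positivity : (0:ℝ) ≤ (n:ℝ)), Real.sqrt_sq h2Tδ]
  -- rpow step
  have hn0 : (n : ℝ) ≠ 0 := by positivity
  have hrpow : (T : ℝ) * δ' ≤ (T : ℝ) ^ ((1 : ℝ) - 1 / (n : ℝ)) := by
    have hδn : δ' ^ (n : ℕ) ≤ ((T : ℝ))⁻¹ := by
      rw [← one_div, le_div_iff₀ hTpos]
      linarith [hpack]
    have hδrpow : δ' ≤ (T : ℝ) ^ (-(1 / (n : ℝ))) := by
      have h2 : (δ' ^ (n:ℕ) : ℝ) ^ ((1:ℝ)/n) ≤ ((T:ℝ)⁻¹) ^ ((1:ℝ)/n) :=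
        Real.rpow_le_rpow (by positivity) hδn (by positivity)
      have h3 : (δ' ^ (n:ℕ) : ℝ) ^ ((1:ℝ)/n) = δ' := by
        rw [← Real.rpow_natCast δ' n, ← Real.rpow_mul hδ'pos.le]
        rw [mul_one_div, div_self hn0, Real.rpow_one]
      have h4 : ((T:ℝ)⁻¹) ^ ((1:ℝ)/n) = (T : ℝ) ^ (-(1 / (n : ℝ))) := by
        rw [Real.inv_rpow hTpos.le, ← Real.rpow_neg hTpos.le]
      rw [h3, h4] at h2
      exact h2
    calc (T : ℝ) * δ' ≤ (T : ℝ) * (T : ℝ) ^ (-(1 / (n : ℝ))) :=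
          mul_le_mul_of_nonneg_left hδrpow hTpos.le
      _ = (T : ℝ) ^ ((1:ℝ)) * (T : ℝ) ^ (-(1 / (n : ℝ))) := by rw [Real.rpow_one]
      _ = (T : ℝ) ^ ((1 : ℝ) - 1 / (n : ℝ)) := by
          rw [← Real.rpow_add hTpos]; ring_nf
  -- final
  have hfinal : (T' : ℝ) ≤ K * (Real.sqrt n * (2 * (T : ℝ) ^ ((1 : ℝ) - 1 / (n : ℝ)))) := by
    have hsqn : (0:ℝ) ≤ Real.sqrt n := Real.sqrt_nonneg _
    calc (T' : ℝ) ≤ K * (Real.sqrt n * (2 * (T : ℝ) * δ')) := hT'M.trans habs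
      _ ≤ K * (Real.sqrt n * (2 * (T : ℝ) ^ ((1 : ℝ) - 1 / (n : ℝ)))) := by
          apply mul_le_mul_of_nonneg_left _ hKnonneg
          apply mul_le_mul_of_nonneg_left _ hsqn
          nlinarith [hrpow]
  have hD : (0:ℝ) < 2 * Real.sqrt n * (T : ℝ) ^ ((1 : ℝ) - 1 / (n : ℝ)) := by
    have h1 : (0:ℝ) < Real.sqrt n := Real.sqrt_pos.mpr (by positivity)
    have h2 : (0:ℝ) < (T : ℝ) ^ ((1 : ℝ) - 1 / (n : ℝ)) := Real.rpow_pos_of_pos hTpos _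
    positivity
  rw [ge_iff_le, div_le_iff₀ hD]
  nlinarith [hfinal, hKnonneg]
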